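/- For every n ≥ 2, every k = (k_1,…,k_n) ∈ ℤ^n, and every i with 1 ≤ i ≤ n−1, sgt(k_1,…,k_n) = −sgt(k_1,…,k_{i−1}, k_{i+1}+1, k_i−1, k_{i+2},…,k_n). -/

import Mathlib

/-- The signed sum `Σ'_{l=a..b} f(l)`: the ordinary sum over `[a,b]` when `a ≤ b`,
and `-Σ_{l=b+1}^{a-1} f(l)` when `a > b`. -/
noncomputable def ssum (a b : ℤ) (f : ℤ → ℤ) : ℤ :=
  if a ≤ b then ∑ l ∈ Finset.Icc a b, f l else -∑ l ∈ Finset.Icc (b + 1) (a - 1), f l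

/-- Iterated signed sum over the box `[a 0, b 0] × ⋯ × [a (m-1), b (m-1)]`,
one signed sum per coordinate. -/
noncomputable def sbox : (m : ℕ) → (Fin m → ℤ) → (Fin m → ℤ) → ((Fin m → ℤ) → ℤ) → ℤ
  | 0, _, _, f => f Fin.elim0
  | m + 1, a, b, f =>
      ssum (a 0) (b 0) fun l =>
        sbox m (fun i => a i.succ) (fun i => b i.succ) fun t => f (Fin.cons l t)

/-- The signed Gelfand–Tsetlin count: `sgt k = 1` for tuples of length `≤ 1`, and
`sgt (k_1,…,k_n) = Σ'_{l_1=k_1..k_2} ⋯ Σ'_{l_{n-1}=k_{n-1}..k_n} sgt (l_1,…,l_{n-1})`. -/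
noncomputable def sgt : (n : ℕ) → (Fin n → ℤ) → ℤ
  | 0, _ => 1
  | 1, _ => 1
  | n + 2, k => sbox (n + 1) (fun i => k i.castSucc) (fun i => k i.succ) (sgt (n + 1))

namespace SgtAux

noncomputable def osum (a b : ℤ) (f : ℤ → ℤ) : ℤ :=
  if a ≤ b then ∑ l ∈ Finset.Ioc a b, f l else -∑ l ∈ Finset.Ioc b a, f l

lemma osum_congr {a b : ℤ} {f g : ℤ → ℤ} (h : ∀ x, f x = g x) :
    osum a b f = osum a b g := by rw [show f = g from funext h]

lemma sum_Ioc_chain (f : ℤ → ℤ) {a b c : ℤ} (hab : a ≤ b) (hbc : b ≤ c) :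
    (∑ l ∈ Finset.Ioc a b, f l) + ∑ l ∈ Finset.Ioc b c, f l = ∑ l ∈ Finset.Ioc a c, f l := by
  rw [← Finset.sum_union]
  · rw [Finset.Ioc_union_Ioc_eq_Ioc hab hbc]
  · rw [Finset.disjoint_left]
    intro x hx hx'
    simp only [Finset.mem_Ioc] at hx hx'
    omega

lemma osum_rev (a b : ℤ) (f : ℤ → ℤ) : osum a b f = -osum b a f := by
  unfold osum
  rcases lt_trichotomy a b with h | rfl | h
  · rw [if_pos h.le, if_neg (by omega), neg_neg]
  · rw [if_pos le_rfl]
    simp [Finset.Ioc_self]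
  · rw [if_neg (by omega), if_pos h.le]

lemma osum_trans (a b c : ℤ) (f : ℤ → ℤ) : osum a b f + osum b c f = osum a c f := by
  unfold osum
  split_ifs with h1 h2 h3 h2 h3 h3 h3
  · exact sum_Ioc_chain f h1 h2
  · omega
  · have := sum_Ioc_chain f (show a ≤ c by omega) (show c ≤ b by omega); linarith
  · have := sum_Ioc_chain f (show c ≤ a by omega) (show a ≤ b by omega); linarith
  · have := sum_Ioc_chain f (show b ≤ a by omega) (show a ≤ c by omega); linarith
  · have := sum_Ioc_chain f (show b ≤ c by omega) (show c ≤ a by omega); linarith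
  · omega
  · have := sum_Ioc_chain f (show c ≤ b by omega) (show b ≤ a by omega); linarith

lemma osum_add (a b : ℤ) (f g : ℤ → ℤ) :
    osum a b (fun l => f l + g l) = osum a b f + osum a b g := by
  unfold osum; split_ifs <;> rw [Finset.sum_add_distrib] <;> ring

lemma osum_neg (a b : ℤ) (f : ℤ → ℤ) :
    osum a b (fun l => -f l) = -osum a b f := by
  unfold osum; split_ifs <;> simp [Finset.sum_neg_distrib]

lemma osum_sum (a b : ℤ) (s : Finset ℤ) (h : ℤ → ℤ → ℤ) :
    osum a b (fun x => ∑ y ∈ s, h x y) = ∑ y ∈ s, osum a b (fun x => h x y) := by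
  unfold osum
  split_ifs
  · exact Finset.sum_comm
  · rw [Finset.sum_neg_distrib]
    congr 1
    exact Finset.sum_comm

lemma osum_comm (a b c d : ℤ) (g : ℤ → ℤ → ℤ) :
    osum a b (fun x => osum c d (fun y => g x y)) =
      osum c d (fun y => osum a b (fun x => g x y)) := by
  by_cases hcd : c ≤ d
  · have h1 : ∀ x, osum c d (fun y => g x y) = ∑ y ∈ Finset.Ioc c d, g x y := by
      intro x; unfold osum; rw [if_pos hcd]
    rw [osum_congr h1, osum_sum]
    unfold osum; rw [if_pos hcd]
  · have h1 : ∀ x, osum c d (fun y => g x y) = -∑ y ∈ Finset.Ioc d c, g x y := by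
      intro x; unfold osum; rw [if_neg hcd]
    rw [osum_congr h1]
    rw [show (fun x => -∑ y ∈ Finset.Ioc d c, g x y) = (fun x => -(fun x' => ∑ y ∈ Finset.Ioc d c, g x' y) x) from rfl]
    rw [osum_neg, osum_sum]
    conv_rhs => rw [osum]
    rw [if_neg hcd]

lemma osum_shift (a b d : ℤ) (f : ℤ → ℤ) :
    osum a b (fun l => f (l + d)) = osum (a + d) (b + d) f := by
  have key : ∀ u v : ℤ, (∑ l ∈ Finset.Ioc u v, f (l + d)) = ∑ l ∈ Finset.Ioc (u + d) (v + d), f l := by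
    intro u v
    rw [← Finset.map_add_right_Ioc u v d, Finset.sum_map]
    rfl
  unfold osum
  split_ifs with h1 h2 h2
  · rw [key]
  · omega
  · omega
  · rw [key]

lemma osum_square (a b : ℤ) (g : ℤ → ℤ → ℤ) (h : ∀ x y, g x y = -g y x) :
    osum a b (fun x => osum a b (fun y => g x y)) = 0 := by
  have h2 : osum a b (fun x => osum a b (fun y => g x y)) =
      osum a b (fun x => osum a b (fun y => -g y x)) :=
    osum_congr (fun x => osum_congr (fun y => h x y))
  have h3 : osum a b (fun x => osum a b (fun y => -g y x)) =
      osum a b (fun x => -osum a b (fun y => g y x)) :=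
    osum_congr (fun x => osum_neg a b _)
  have h4 : osum a b (fun x => -osum a b (fun y => g y x)) =
      -osum a b (fun x => osum a b (fun y => g y x)) := osum_neg a b _
  have h5 : osum a b (fun x => osum a b (fun y => g y x)) =
      osum a b (fun x => osum a b (fun y => g x y)) :=
    osum_comm a b a b (fun x y => g y x)
  linarith [h2, h3, h4, h5]

lemma ssum_eq_osum (a b : ℤ) (f : ℤ → ℤ) : ssum a b f = osum (a - 1) b f := by
  unfold ssum osum
  have hIcc : ∀ u v : ℤ, Finset.Icc u v = Finset.Ioc (u - 1) v := by
    intro u v; ext x; simp only [Finset.mem_Icc, Finset.mem_Ioc]; omega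
  rcases lt_trichotomy a (b + 1) with h | h | h
  · rw [if_pos (by omega), if_pos (by omega), hIcc]
  · rw [if_neg (by omega), if_pos (by omega)]
    rw [Finset.Ioc_eq_empty (by omega), Finset.Icc_eq_empty (by omega)]
    simp
  · rw [if_neg (by omega), if_neg (by omega), hIcc]
    norm_num


lemma osum_shift1 (a b : ℤ) (f : ℤ → ℤ) :
    osum a b (fun l => f (l + 1)) = osum (a + 1) (b + 1) f := osum_shift a b 1 f

lemma osum_shiftm1 (a b : ℤ) (f : ℤ → ℤ) :
    osum a b (fun l => f (l - 1)) = osum (a - 1) (b - 1) f := by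
  have h := osum_shift a b (-1) f
  simp only [← sub_eq_add_neg] at h
  exact h

lemma coreB (A b q : ℤ) (g : ℤ → ℤ → ℤ) (hg : ∀ x y, g x y = -g (y + 1) (x - 1)) :
    osum A b (fun x => osum (b - 1) q (fun y => g x y)) =
      -osum b A (fun x => osum (A - 1) q (fun y => g x y)) := by
  rw [← osum_rev]
  have sq : osum A b (fun x => osum A b (fun y => g x (y - 1))) = 0 := by
    refine osum_square A b _ (fun x y => ?_)
    rw [hg x (y - 1), show y - 1 + 1 = y from by ring]
  have e1 : ∀ x : ℤ, osum (b - 1) q (fun y => g x y) =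
      osum (b - 1) (A - 1) (fun y => g x y) + osum (A - 1) q (fun y => g x y) :=
    fun x => (osum_trans _ _ _ _).symm
  rw [osum_congr e1, osum_add]
  have e2 : ∀ x : ℤ, osum (b - 1) (A - 1) (fun y => g x y) =
      -osum A b (fun y => g x (y - 1)) := by
    intro x
    rw [← osum_shiftm1 b A (fun y => g x y), osum_rev]
  rw [osum_congr e2, osum_neg, sq]
  ring

lemma coreC (P b c : ℤ) (g : ℤ → ℤ → ℤ) (hg : ∀ x y, g x y = -g (y + 1) (x - 1)) :
    osum P b (fun x => osum (b - 1) c (fun y => g x y)) =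
      -osum P (c + 1) (fun x => osum c (b - 1) (fun y => g x y)) := by
  have e1 : ∀ x : ℤ, osum c (b - 1) (fun y => g x y) =
      -osum (b - 1) c (fun y => g x y) := fun x => osum_rev _ _ _
  rw [osum_congr e1, osum_neg, neg_neg]
  rw [← osum_trans P b (c + 1)]
  have sq : osum (b - 1) c (fun x => osum (b - 1) c (fun y => g (x + 1) y)) = 0 := by
    refine osum_square _ _ _ (fun x y => ?_)
    rw [hg (x + 1) y, show x + 1 - 1 = x from by ring]
  have e2 : osum b (c + 1) (fun x => osum (b - 1) c (fun y => g x y)) =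
      osum (b - 1) c (fun x => osum (b - 1) c (fun y => g (x + 1) y)) := by
    rw [osum_shift1 (b - 1) c (fun x => osum (b - 1) c (fun y => g x y))]
    norm_num
  rw [e2, sq, add_zero]

lemma coreD (P B C q : ℤ) (g : ℤ → ℤ → ℤ → ℤ)
    (hg1 : ∀ x y z, g x y z = -g (y + 1) (x - 1) z)
    (hg2 : ∀ x y z, g x y z = -g x (z + 1) (y - 1)) :
    osum P B (fun x => osum (B - 1) C (fun y => osum (C - 1) q (fun z => g x y z))) =
      -osum P (C + 1) (fun x => osum C (B - 1) (fun y =>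
        osum (B - 1 - 1) q (fun z => g x y z))) := by
  have e1 : ∀ x : ℤ, osum C (B - 1) (fun y => osum (B - 1 - 1) q (fun z => g x y z)) =
      -osum (B - 1) C (fun y => osum (B - 1 - 1) q (fun z => g x y z)) :=
    fun x => osum_rev _ _ _
  rw [osum_congr e1, osum_neg, neg_neg]
  -- Chasles on x
  rw [← osum_trans P B (C + 1)]
  -- T2 = 0
  have T2 : osum B (C + 1) (fun x => osum (B - 1) C (fun y =>
      osum (B - 1 - 1) q (fun z => g x y z))) = 0 := by
    have e2 : osum B (C + 1) (fun x => osum (B - 1) C (fun y =>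
        osum (B - 1 - 1) q (fun z => g x y z))) =
        osum (B - 1) C (fun x => osum (B - 1) C (fun y =>
        osum (B - 1 - 1) q (fun z => g (x + 1) y z))) := by
      rw [osum_shift1 (B - 1) C (fun x => osum (B - 1) C (fun y =>
        osum (B - 1 - 1) q (fun z => g x y z)))]
      norm_num
    rw [e2]
    refine osum_square _ _ _ (fun x y => ?_)
    rw [← osum_neg]
    refine osum_congr (fun z => ?_)
    rw [hg1 (x + 1) y z, show x + 1 - 1 = x from by ring]
  rw [T2, add_zero]
  -- split z in the P..B part
  have e4 : ∀ x y : ℤ, osum (B - 1 - 1) q (fun z => g x y z) =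
      osum (B - 1 - 1) (C - 1) (fun z => g x y z) + osum (C - 1) q (fun z => g x y z) :=
    fun x y => (osum_trans _ _ _ _).symm
  have e5 : osum P B (fun x => osum (B - 1) C (fun y =>
      osum (B - 1 - 1) q (fun z => g x y z))) =
      osum P B (fun x => osum (B - 1) C (fun y =>
        osum (B - 1 - 1) (C - 1) (fun z => g x y z))) +
      osum P B (fun x => osum (B - 1) C (fun y =>
        osum (C - 1) q (fun z => g x y z))) := by
    rw [← osum_add]
    refine osum_congr (fun x => ?_)
    rw [← osum_add]
    exact osum_congr (fun y => e4 x y)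
  rw [e5]
  -- T1 = 0
  have T1 : osum P B (fun x => osum (B - 1) C (fun y =>
      osum (B - 1 - 1) (C - 1) (fun z => g x y z))) = 0 := by
    have s1 : ∀ x y : ℤ, osum (B - 1 - 1) (C - 1) (fun z => g x y z) =
        osum (B - 1) C (fun z => g x y (z - 1)) := by
      intro x y
      rw [osum_shiftm1 (B - 1) C (fun z => g x y z)]
    have s2 : osum P B (fun x => osum (B - 1) C (fun y =>
        osum (B - 1 - 1) (C - 1) (fun z => g x y z))) =
        osum (B - 1) C (fun y => osum (B - 1) C (fun z =>
          osum P B (fun x => g x y (z - 1)))) := by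
      rw [osum_congr (fun x => osum_congr (fun y => s1 x y))]
      rw [osum_comm P B (B - 1) C]
      refine osum_congr (fun y => ?_)
      exact osum_comm P B (B - 1) C _
    rw [s2]
    refine osum_square _ _ _ (fun y z => ?_)
    rw [← osum_neg]
    refine osum_congr (fun x => ?_)
    rw [hg2 x y (z - 1), show z - 1 + 1 = z from by ring]
  rw [T1, zero_add]

lemma ssum_congr {a b : ℤ} {f g : ℤ → ℤ} (h : ∀ x, f x = g x) :
    ssum a b f = ssum a b g := by rw [show f = g from funext h]

lemma ssum_neg (a b : ℤ) (f : ℤ → ℤ) :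
    ssum a b (fun l => -f l) = -ssum a b f := by
  simp only [ssum_eq_osum]; exact osum_neg _ _ _

lemma lemA (a b : ℤ) (g : ℤ → ℤ) : ssum a b g = -ssum (b + 1) (a - 1) g := by
  simp only [ssum_eq_osum]
  rw [show b + 1 - 1 = b from by ring]
  exact osum_rev _ _ _

lemma lemB (a b q : ℤ) (g : ℤ → ℤ → ℤ) (hg : ∀ x y, g x y = -g (y + 1) (x - 1)) :
    ssum a b (fun x => ssum b q (fun y => g x y)) =
      -ssum (b + 1) (a - 1) (fun x => ssum (a - 1) q (fun y => g x y)) := by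
  simp only [ssum_eq_osum]
  rw [show b + 1 - 1 = b from by ring]
  exact coreB (a - 1) b q g hg

lemma lemC (p b c : ℤ) (g : ℤ → ℤ → ℤ) (hg : ∀ x y, g x y = -g (y + 1) (x - 1)) :
    ssum p b (fun x => ssum b c (fun y => g x y)) =
      -ssum p (c + 1) (fun x => ssum (c + 1) (b - 1) (fun y => g x y)) := by
  simp only [ssum_eq_osum]
  rw [show c + 1 - 1 = c from by ring]
  exact coreC (p - 1) b c g hg

lemma lemD (p B C q : ℤ) (g : ℤ → ℤ → ℤ → ℤ)
    (hg1 : ∀ x y z, g x y z = -g (y + 1) (x - 1) z)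
    (hg2 : ∀ x y z, g x y z = -g x (z + 1) (y - 1)) :
    ssum p B (fun x => ssum B C (fun y => ssum C q (fun z => g x y z))) =
      -ssum p (C + 1) (fun x => ssum (C + 1) (B - 1) (fun y =>
        ssum (B - 1) q (fun z => g x y z))) := by
  simp only [ssum_eq_osum]
  rw [show C + 1 - 1 = C from by ring]
  exact coreD (p - 1) B C q g hg1 hg2

def swapv {m : ℕ} (i : Fin m) (t : Fin (m + 1) → ℤ) : Fin (m + 1) → ℤ :=
  fun j => if j = i.castSucc then t i.succ + 1 else if j = i.succ then t i.castSucc - 1 else t j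

noncomputable def csbox (m : ℕ) (c : Fin (m + 1) → ℤ) (f : (Fin m → ℤ) → ℤ) : ℤ :=
  sbox m (fun j => c j.castSucc) (fun j => c j.succ) f

lemma csbox_zero (c : Fin 1 → ℤ) (f : (Fin 0 → ℤ) → ℤ) : csbox 0 c f = f Fin.elim0 := rfl

lemma csbox_succ (m : ℕ) (c : Fin (m + 2) → ℤ) (f : (Fin (m + 1) → ℤ) → ℤ) :
    csbox (m + 1) c f =
      ssum (c 0) (c 1) (fun l =>
        csbox m (fun j => c j.succ) (fun t => f (Fin.cons l t))) := by
  simp only [csbox, sbox, Fin.castSucc_zero, Fin.succ_zero_eq_one]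
  have hb : (fun (j : Fin m) => c j.succ.castSucc) = (fun j => c j.castSucc.succ) := by
    funext j; rw [Fin.succ_castSucc]
  rw [hb]

lemma sbox_neg : ∀ (m : ℕ) (a b : Fin m → ℤ) (f : (Fin m → ℤ) → ℤ),
    sbox m a b (fun t => -f t) = -sbox m a b f := by
  intro m
  induction m with
  | zero => intro a b f; rfl
  | succ m IH =>
    intro a b f
    simp only [sbox]
    rw [ssum_congr (fun l => IH _ _ (fun t => f (Fin.cons l t))), ssum_neg]

lemma csbox_neg (m : ℕ) (c : Fin (m + 1) → ℤ) (f : (Fin m → ℤ) → ℤ) :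
    csbox m c (fun t => -f t) = -csbox m c f := sbox_neg m _ _ f

lemma csbox_congr {m : ℕ} {c : Fin (m + 1) → ℤ} {f g : (Fin m → ℤ) → ℤ}
    (h : ∀ t, f t = g t) : csbox m c f = csbox m c g := by
  rw [show f = g from funext h]

lemma swapv_cons_zero {m : ℕ} (x y : ℤ) (t : Fin m → ℤ) :
    swapv 0 (Fin.cons x (Fin.cons y t)) = Fin.cons (y + 1) (Fin.cons (x - 1) t) := by
  funext j
  refine Fin.cases ?_ (fun j' => ?_) j
  · simp [swapv]
  · refine Fin.cases ?_ (fun j'' => ?_) j'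
    · simp [swapv, Fin.ext_iff]
    · simp [swapv, Fin.ext_iff]

lemma swapv_succ_cons {m : ℕ} (j : Fin m) (l : ℤ) (t : Fin (m + 1) → ℤ) :
    swapv j.succ (Fin.cons l t) = Fin.cons l (swapv j t) := by
  funext x
  refine Fin.cases ?_ (fun x' => ?_) x
  · simp [swapv, Fin.ext_iff]
  · simp [swapv, Fin.ext_iff, ← Fin.succ_castSucc]

lemma swapv_tail {m : ℕ} (j : Fin (m + 1)) (c : Fin (m + 3) → ℤ) :
    (fun x : Fin (m + 2) => swapv j.succ c x.succ) = swapv j (fun x => c x.succ) := by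
  funext x
  simp [swapv, Fin.ext_iff, ← Fin.succ_castSucc]

lemma swapv_zero_val0 {m : ℕ} (c : Fin (m + 2) → ℤ) : swapv 0 c 0 = c 1 + 1 := by
  simp [swapv, Fin.ext_iff]

lemma swapv_zero_val1 {m : ℕ} (c : Fin (m + 2) → ℤ) : swapv 0 c 1 = c 0 - 1 := by
  simp [swapv, Fin.ext_iff]

lemma swap0 (m : ℕ) (c : Fin (m + 2) → ℤ) (f : (Fin (m + 1) → ℤ) → ℤ)
    (hf : ∀ (j : Fin m) (t : Fin (m + 1) → ℤ), f t = -f (swapv j t)) :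
    csbox (m + 1) c f = -csbox (m + 1) (swapv 0 c) f := by
  cases m with
  | zero =>
    rw [csbox_succ 0 c f, csbox_succ 0 (swapv 0 c) f]
    rw [swapv_zero_val0 c, swapv_zero_val1 c]
    exact lemA (c 0) (c 1) _
  | succ m =>
    have e01 : (0 : Fin (m + 2)).succ = (1 : Fin (m + 3)) := by simp [Fin.ext_iff]
    have e12 : (1 : Fin (m + 2)).succ = (2 : Fin (m + 3)) := by
      simp [Fin.ext_iff, Nat.mod_eq_of_lt]
    rw [csbox_succ (m + 1) c f, csbox_succ (m + 1) (swapv 0 c) f]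
    have pL : ∀ x : ℤ,
        csbox (m + 1) (fun j => c j.succ) (fun t => f (Fin.cons x t)) =
        ssum (c 1) (c 2) (fun y =>
          csbox m (fun j => c j.succ.succ) (fun t => f (Fin.cons x (Fin.cons y t)))) := by
      intro x
      rw [csbox_succ m (fun j => c j.succ) _, e01, e12]
    have hvt : (fun j : Fin (m + 2) => swapv 0 c j.succ) =
        Fin.cons (c 0 - 1) (fun j' : Fin (m + 1) => c j'.succ.succ) := by
      funext j
      refine Fin.cases ?_ (fun j' => ?_) j
      · simp [swapv, Fin.ext_iff]
      · simp only [swapv, Fin.cons_succ]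
        rw [if_neg (by rw [Fin.castSucc_zero]; exact Fin.succ_ne_zero _),
          if_neg (fun h => Fin.succ_ne_zero _ (Fin.succ_injective _ h))]
    have pR : ∀ x : ℤ,
        csbox (m + 1) (fun j => swapv 0 c j.succ) (fun t => f (Fin.cons x t)) =
        ssum (c 0 - 1) (c 2) (fun y =>
          csbox m (fun j => c j.succ.succ) (fun t => f (Fin.cons x (Fin.cons y t)))) := by
      intro x
      rw [hvt, csbox_succ m _ _]
      simp only [Fin.cons_zero, Fin.cons_succ]
      have e01' : (0 : Fin (m + 1)).succ = (1 : Fin (m + 2)) := by simp [Fin.ext_iff]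
      rw [show (1 : Fin (m + 2)) = (0 : Fin (m + 1)).succ from e01'.symm, Fin.cons_succ,
        show (0 : Fin (m + 1)).succ.succ = (2 : Fin (m + 3)) from by
          simp [Fin.ext_iff, Nat.mod_eq_of_lt]]
    rw [ssum_congr pL, ssum_congr pR, swapv_zero_val0 c, swapv_zero_val1 c]
    refine lemB (c 0) (c 1) (c 2)
      (fun x y => csbox m (fun j => c j.succ.succ) (fun t => f (Fin.cons x (Fin.cons y t))))
      (fun x y => ?_)
    have h1 : ∀ t : Fin m → ℤ,
        f (Fin.cons (y + 1) (Fin.cons (x - 1) t)) = -f (Fin.cons x (Fin.cons y t)) := by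
      intro t
      have h2 := hf 0 (Fin.cons x (Fin.cons y t))
      rw [swapv_cons_zero] at h2
      omega
    show csbox m (fun j => c j.succ.succ) (fun t => f (Fin.cons x (Fin.cons y t))) =
      -csbox m (fun j => c j.succ.succ) (fun t => f (Fin.cons (y + 1) (Fin.cons (x - 1) t)))
    rw [show (fun t : Fin m → ℤ => f (Fin.cons (y + 1) (Fin.cons (x - 1) t))) =
        (fun t => -f (Fin.cons x (Fin.cons y t))) from funext h1, csbox_neg, neg_neg]

lemma swap1 (m : ℕ) (c : Fin (m + 3) → ℤ) (f : (Fin (m + 2) → ℤ) → ℤ)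
    (hf : ∀ (j : Fin (m + 1)) (t : Fin (m + 2) → ℤ), f t = -f (swapv j t)) :
    csbox (m + 2) c f = -csbox (m + 2) (swapv 1 c) f := by
  have hv0 : swapv (1 : Fin (m + 2)) c 0 = c 0 := by
    simp [swapv, Fin.ext_iff, Nat.mod_eq_of_lt]
  have hv1 : swapv (1 : Fin (m + 2)) c 1 = c 2 + 1 := by
    simp [swapv, Fin.ext_iff, Nat.mod_eq_of_lt]
  have hv2 : swapv (1 : Fin (m + 2)) c 2 = c 1 - 1 := by
    simp [swapv, Fin.ext_iff, Nat.mod_eq_of_lt]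
  cases m with
  | zero =>
    have e01 : (0 : Fin 2).succ = (1 : Fin 3) := by decide
    have e12 : (1 : Fin 2).succ = (2 : Fin 3) := by decide
    rw [csbox_succ 1 c f, csbox_succ 1 (swapv 1 c) f]
    have pL : ∀ x : ℤ,
        csbox 1 (fun j => c j.succ) (fun t => f (Fin.cons x t)) =
        ssum (c 1) (c 2) (fun y => f (Fin.cons x (Fin.cons y Fin.elim0))) := by
      intro x
      rw [csbox_succ 0 (fun j => c j.succ) _, e01, e12]
      simp only [csbox_zero]
    have pR : ∀ x : ℤ,
        csbox 1 (fun j => swapv 1 c j.succ) (fun t => f (Fin.cons x t)) =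
        ssum (c 2 + 1) (c 1 - 1) (fun y => f (Fin.cons x (Fin.cons y Fin.elim0))) := by
      intro x
      rw [csbox_succ 0 (fun j => swapv 1 c j.succ) _, e01, e12, hv1, hv2]
      simp only [csbox_zero]
    rw [ssum_congr pL, ssum_congr pR, hv0, hv1]
    refine lemC (c 0) (c 1) (c 2) (fun x y => f (Fin.cons x (Fin.cons y Fin.elim0)))
      (fun x y => ?_)
    have h2 := hf 0 (Fin.cons x (Fin.cons y Fin.elim0))
    rw [swapv_cons_zero] at h2
    show f (Fin.cons x (Fin.cons y Fin.elim0)) =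
      -f (Fin.cons (y + 1) (Fin.cons (x - 1) Fin.elim0))
    rw [show Fin.elim0 = (fun t : Fin 0 => t.elim0) from funext fun t => t.elim0] at h2 ⊢
    exact h2
  | succ m =>
    have w3 : ((3 : Fin (m + 4)) : ℕ) = 3 := by
      rw [show ((3 : Fin (m + 4)) : ℕ) = 3 % (m + 4) from rfl]
      exact Nat.mod_eq_of_lt (by omega)
    have e1 : (0 : Fin (m + 3)).succ = (1 : Fin (m + 4)) := by
      simp [Fin.ext_iff, Nat.mod_eq_of_lt]
    have e2 : (1 : Fin (m + 3)).succ = (2 : Fin (m + 4)) := by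
      simp [Fin.ext_iff, Nat.mod_eq_of_lt]
    have e3 : (0 : Fin (m + 2)).succ.succ = (2 : Fin (m + 4)) := by
      simp [Fin.ext_iff, Nat.mod_eq_of_lt]
    have e4 : (1 : Fin (m + 2)).succ.succ = (3 : Fin (m + 4)) := by
      simp [Fin.ext_iff, w3, Nat.mod_eq_of_lt]
    have hv3 : swapv (1 : Fin (m + 3)) c 3 = c 3 := by
      simp [swapv, Fin.ext_iff, w3, Nat.mod_eq_of_lt]
    rw [csbox_succ (m + 2) c f, csbox_succ (m + 2) (swapv 1 c) f]
    have pL : ∀ x : ℤ,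
        csbox (m + 2) (fun j => c j.succ) (fun t => f (Fin.cons x t)) =
        ssum (c 1) (c 2) (fun y => ssum (c 2) (c 3) (fun z =>
          csbox m (fun j => c j.succ.succ.succ)
            (fun t => f (Fin.cons x (Fin.cons y (Fin.cons z t)))))) := by
      intro x
      rw [csbox_succ (m + 1) (fun j => c j.succ) _, e1, e2]
      refine ssum_congr (fun y => ?_)
      rw [csbox_succ m (fun j => c j.succ.succ) _, e3, e4]
    have pR : ∀ x : ℤ,
        csbox (m + 2) (fun j => swapv 1 c j.succ) (fun t => f (Fin.cons x t)) =
        ssum (c 2 + 1) (c 1 - 1) (fun y => ssum (c 1 - 1) (c 3) (fun z =>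
          csbox m (fun j => c j.succ.succ.succ)
            (fun t => f (Fin.cons x (Fin.cons y (Fin.cons z t)))))) := by
      intro x
      rw [csbox_succ (m + 1) (fun j => swapv 1 c j.succ) _, e1, e2, hv1, hv2]
      refine ssum_congr (fun y => ?_)
      rw [csbox_succ m (fun j => swapv 1 c j.succ.succ) _, e3, e4, hv2, hv3]
      congr 1
    rw [ssum_congr pL, ssum_congr pR, hv0, hv1]
    refine lemD (c 0) (c 1) (c 2) (c 3)
      (fun x y z => csbox m (fun j => c j.succ.succ.succ)
        (fun t => f (Fin.cons x (Fin.cons y (Fin.cons z t)))))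
      (fun x y z => ?_) (fun x y z => ?_)
    · have h1 : ∀ t : Fin m → ℤ,
          f (Fin.cons (y + 1) (Fin.cons (x - 1) (Fin.cons z t))) =
            -f (Fin.cons x (Fin.cons y (Fin.cons z t))) := by
        intro t
        have h2 := hf 0 (Fin.cons x (Fin.cons y (Fin.cons z t)))
        rw [swapv_cons_zero] at h2
        omega
      show csbox m (fun j => c j.succ.succ.succ)
          (fun t => f (Fin.cons x (Fin.cons y (Fin.cons z t)))) =
        -csbox m (fun j => c j.succ.succ.succ)
          (fun t => f (Fin.cons (y + 1) (Fin.cons (x - 1) (Fin.cons z t))))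
      rw [show (fun t : Fin m → ℤ => f (Fin.cons (y + 1) (Fin.cons (x - 1) (Fin.cons z t)))) =
          (fun t => -f (Fin.cons x (Fin.cons y (Fin.cons z t)))) from funext h1,
        csbox_neg, neg_neg]
    · have h1 : ∀ t : Fin m → ℤ,
          f (Fin.cons x (Fin.cons (z + 1) (Fin.cons (y - 1) t))) =
            -f (Fin.cons x (Fin.cons y (Fin.cons z t))) := by
        intro t
        have h2 := hf 1 (Fin.cons x (Fin.cons y (Fin.cons z t)))
        rw [show (1 : Fin (m + 2)) = (0 : Fin (m + 1)).succ from by simp [Fin.ext_iff],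
          swapv_succ_cons, swapv_cons_zero] at h2
        omega
      show csbox m (fun j => c j.succ.succ.succ)
          (fun t => f (Fin.cons x (Fin.cons y (Fin.cons z t)))) =
        -csbox m (fun j => c j.succ.succ.succ)
          (fun t => f (Fin.cons x (Fin.cons (z + 1) (Fin.cons (y - 1) t))))
      rw [show (fun t : Fin m → ℤ => f (Fin.cons x (Fin.cons (z + 1) (Fin.cons (y - 1) t)))) =
          (fun t => -f (Fin.cons x (Fin.cons y (Fin.cons z t)))) from funext h1,
        csbox_neg, neg_neg]

lemma csbox_swap : ∀ (m : ℕ) (c : Fin (m + 2) → ℤ) (i : Fin (m + 1))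
    (f : (Fin (m + 1) → ℤ) → ℤ),
    (∀ (j : Fin m) (t : Fin (m + 1) → ℤ), f t = -f (swapv j t)) →
    csbox (m + 1) c f = -csbox (m + 1) (swapv i c) f := by
  intro m
  induction m with
  | zero =>
    intro c i f hf
    rw [Fin.fin_one_eq_zero i]
    exact swap0 0 c f hf
  | succ m IH =>
    intro c i f hf
    rcases Fin.eq_zero_or_eq_succ i with rfl | ⟨i', rfl⟩
    · exact swap0 (m + 1) c f hf
    · by_cases hi' : i' = 0
      · subst hi'
        rw [show (0 : Fin (m + 1)).succ = (1 : Fin (m + 2)) from by simp [Fin.ext_iff]]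
        exact swap1 m c f hf
      · have hvne : (i' : ℕ) ≠ 0 := by
          intro h; exact hi' (Fin.ext (by simpa using h))
        have n1 : (0 : Fin (m + 3)) ≠ i'.succ.castSucc := by
          intro h; have := congrArg Fin.val h
          simp [Fin.coe_castSucc, Fin.val_succ] at this
        have n2 : (0 : Fin (m + 3)) ≠ i'.succ.succ := by
          intro h; have := congrArg Fin.val h
          simp [Fin.val_succ] at this
        have n3 : (1 : Fin (m + 3)) ≠ i'.succ.castSucc := by
          intro h; have := congrArg Fin.val h
          simp [Fin.coe_castSucc, Fin.val_succ] at this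
          exact hi' this
        have n4 : (1 : Fin (m + 3)) ≠ i'.succ.succ := by
          intro h; have := congrArg Fin.val h
          simp [Fin.val_succ] at this
        have hb0 : swapv i'.succ c 0 = c 0 := by simp only [swapv]; rw [if_neg n1, if_neg n2]
        have hb1 : swapv i'.succ c 1 = c 1 := by simp only [swapv]; rw [if_neg n3, if_neg n4]
        rw [csbox_succ (m + 1) c f, csbox_succ (m + 1) (swapv i'.succ c) f,
          hb0, hb1, swapv_tail i' c, ← ssum_neg]
        refine ssum_congr (fun l => ?_)
        exact IH (fun j => c j.succ) i' (fun t => f (Fin.cons l t)) (fun j t => by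
          show f (Fin.cons l t) = -f (Fin.cons l (swapv j t))
          rw [hf j.succ (Fin.cons l t), swapv_succ_cons])

end SgtAux

/-- For every `n ≥ 2` and `1 ≤ i ≤ n-1`,
`sgt (k_1,…,k_n) = -sgt (k_1,…,k_{i-1}, k_{i+1}+1, k_i-1, k_{i+2},…,k_n)`. -/
theorem sgt_swap (n : ℕ) (k : Fin (n + 2) → ℤ) (i : Fin (n + 1)) :
    sgt (n + 2) k =
      -sgt (n + 2) fun j =>
        if j = i.castSucc then k i.succ + 1
        else if j = i.succ then k i.castSucc - 1 else k j := by
  induction n with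
  | zero => exact SgtAux.csbox_swap 0 k i (sgt 1) (fun j t => j.elim0)
  | succ n IH => exact SgtAux.csbox_swap (n + 1) k i (sgt (n + 2)) (fun j t => IH t j)
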